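/- arXiv:1509.08050 — 3 statements merged into one kernel-verified Lean document; each statement's English description precedes it below -/
import Mathlib

section
/- Let P_1 = p₁/q₁, P_2 = p₂/q₂ ∈ ℚ^d in lowest terms, let a ∈ ℤ^d with a·p₂ ≡ 0 (mod q₂), F(x) = a·x - (a·p₂)/q₂, and let v = b·(p₁/q₁) + z ∈ Λ_{P_1} with a·v ≠ 0. Define P_0 = P_1 - (F(P_1)/(a·v))·v, the intersection of the line through P_1 in direction v with the hyperplane {F = 0}. Then each coordinate of P_0 can be written as a fraction with common denominator q₁·(a·v) whose numerators are integers; consequently, if P_0 = p₀/q₀ in lowest terms, then q₀ ≤ q₁·|a·v|. -/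
/-- The intersection point `P₀` of the line through `P₁` in direction `v ∈ Λ_{P₁}` with the
hyperplane `{F_{P₂} = 0}` has coordinates with common integer denominator `q₁·(a·v)`; hence
its reduced denominator satisfies `q₀ ≤ q₁ |a·v|`. -/
theorem stmt_12 (d : ℕ) (p1 p2 : Fin d → ℤ) (q1 q2 : ℕ) (hq1 : 0 < q1) (hq2 : 0 < q2)
    (hcop1 : Int.gcd (Finset.univ.gcd p1) q1 = 1)
    (hcop2 : Int.gcd (Finset.univ.gcd p2) q2 = 1)
    (b : ℤ) (z : Fin d → ℤ) (v : Fin d → ℝ)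
    (hv : ∀ i, v i = b * (p1 i / q1) + z i)
    (a : Fin d → ℤ) (hdvd : (q2 : ℤ) ∣ ∑ i, a i * p2 i)
    (F : (Fin d → ℝ) → ℝ)
    (hF : ∀ y : Fin d → ℝ, F y = (∑ i, (a i : ℝ) * y i) - (∑ i, (a i : ℝ) * p2 i) / q2)
    (hav : ∑ i, (a i : ℝ) * v i ≠ 0)
    (P0 : Fin d → ℝ)
    (hP0 : ∀ i, P0 i = p1 i / q1 -
      (F (fun j => p1 j / q1) / (∑ j, (a j : ℝ) * v j)) * v i) :
    ∃ (m : Fin d → ℤ) (D : ℤ), (D : ℝ) = (q1 : ℝ) * ∑ j, (a j : ℝ) * v j ∧ D ≠ 0 ∧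
      (∀ i, P0 i = m i / D) ∧
      ∀ (p0 : Fin d → ℤ) (q0 : ℕ), 0 < q0 →
        Int.gcd (Finset.univ.gcd p0) q0 = 1 → (∀ i, P0 i = p0 i / q0) →
        (q0 : ℝ) ≤ (q1 : ℝ) * |∑ j, (a j : ℝ) * v j| := by
  have hq1R : (q1 : ℝ) ≠ 0 := Nat.cast_ne_zero.mpr hq1.ne'
  have hq2R : (q2 : ℝ) ≠ 0 := Nat.cast_ne_zero.mpr hq2.ne'
  set C : ℤ := (∑ i, a i * p2 i) / q2 with hCdef
  have hC : (q2 : ℤ) * C = ∑ i, a i * p2 i := Int.mul_ediv_cancel' hdvd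
  set w : Fin d → ℤ := fun i => b * p1 i + q1 * z i with hwdef
  have hvw : ∀ i, v i = (w i : ℝ) / q1 := by
    intro i
    rw [hv i, hwdef]
    push_cast
    field_simp
  set D : ℤ := ∑ j, a j * w j with hDdef
  have hsum : ∑ j, (a j : ℝ) * v j = (D : ℝ) / q1 := by
    rw [hDdef]
    push_cast
    rw [Finset.sum_div]
    exact Finset.sum_congr rfl fun j _ => by rw [hvw j]; ring
  have hD : (D : ℝ) = (q1 : ℝ) * ∑ j, (a j : ℝ) * v j := by
    rw [hsum]; field_simp
  have hDR : (D : ℝ) ≠ 0 := by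
    rw [hD]; exact mul_ne_zero hq1R hav
  have hD0 : D ≠ 0 := fun h => hDR (by rw [h]; norm_cast)
  set S : ℤ := ∑ j, a j * p1 j with hSdef
  set m : Fin d → ℤ := fun i => (∑ j, a j * (p1 i * z j - p1 j * z i)) + C * w i with hmdef
  have key : ∀ i, (q1 : ℤ) * m i = p1 i * D - (S - q1 * C) * w i := by
    intro i
    have h1 : p1 i * D - S * w i = ∑ j, (q1 : ℤ) * (a j * (p1 i * z j - p1 j * z i)) := by
      rw [hDdef, hSdef, Finset.mul_sum, Finset.sum_mul, ← Finset.sum_sub_distrib]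
      exact Finset.sum_congr rfl fun j _ => by simp only [hwdef]; ring
    have h2 : (q1:ℤ) * m i = (p1 i * D - S * w i) + q1 * (C * w i) := by
      rw [hmdef]; simp only [mul_add, Finset.mul_sum, h1]
    rw [h2]; ring
  have hCR : (∑ i, (a i : ℝ) * p2 i) / q2 = (C : ℝ) := by
    have h : (q2 : ℝ) * (C : ℝ) = ∑ i, (a i : ℝ) * p2 i := by exact_mod_cast hC
    field_simp
    linarith [h]
  have hSR : (∑ j, (a j : ℝ) * (p1 j / q1)) = (S : ℝ) / q1 := by
    rw [hSdef]; push_cast; rw [Finset.sum_div]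
    exact Finset.sum_congr rfl fun j _ => by ring
  have hP0m : ∀ i, P0 i = (m i : ℝ) / D := by
    intro i
    rw [hP0 i, hF, hsum, hvw i, hCR, hSR]
    have keyR : (q1 : ℝ) * m i = p1 i * D - ((S:ℝ) - q1 * C) * w i := by
      exact_mod_cast congrArg (Int.cast : ℤ → ℝ) (key i)
    field_simp
    linear_combination (-1 : ℝ) * keyR
  refine ⟨m, D, hD, hD0, hP0m, ?_⟩
  intro p0 q0 hq0 hcop0 hp0
  have hq0R : (q0 : ℝ) ≠ 0 := Nat.cast_ne_zero.mpr hq0.ne'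
  have hcross : ∀ i, D * p0 i = (q0 : ℤ) * m i := by
    intro i
    have := (hP0m i).symm.trans (hp0 i)
    field_simp at this
    have h3 : (D : ℝ) * p0 i = (q0 : ℝ) * m i := by linarith [this]
    exact_mod_cast h3
  have hdvd0 : (q0 : ℤ) ∣ Finset.univ.gcd (fun i => D * p0 i) :=
    Finset.dvd_gcd fun i _ => ⟨m i, hcross i⟩
  rw [Finset.gcd_mul_left] at hdvd0
  rw [← Int.abs_eq_normalize] at hdvd0
  have hcp : IsCoprime (q0 : ℤ) (Finset.univ.gcd p0) := by
    rw [Int.isCoprime_iff_gcd_eq_one, Int.gcd_comm]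
    exact hcop0
  have hdvdD : (q0 : ℤ) ∣ |D| := hcp.dvd_of_dvd_mul_right hdvd0
  have hle : (q0 : ℤ) ≤ |D| := Int.le_of_dvd (abs_pos.mpr hD0) hdvdD
  have : ((q0 : ℤ) : ℝ) ≤ (|D| : ℝ) := by exact_mod_cast hle
  calc (q0 : ℝ) ≤ ((|D| : ℤ) : ℝ) := by exact_mod_cast hle
    _ = |(D : ℝ)| := by push_cast; rfl
    _ = (q1 : ℝ) * |∑ j, (a j : ℝ) * v j| := by
        rw [hD, abs_mul, abs_of_nonneg (Nat.cast_nonneg q1)]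
end

section
/- Let a = (a_1,…,a_d) ∈ ℤ^d with a ≠ 0 and ξ = max_i |a_i|, let C ∈ ℝ, and consider the affine hyperplane H = { x ∈ ℝ^d : a·x + C = 0 }. Suppose P = p/q ∈ ℚ^d lies on H. Then for any x ∈ ℝ^d with |x_i - p_i/q| < c·q^{-1-r_i} for all i (where r_i ≥ 0, Σ r_i = 1, and additionally |a_i| ≤ t^{r_i} for some t ≤ q), the Euclidean distance from x to H satisfies dist(x, H) ≤ d·c/(q·ξ). -/
/-- Distance estimate to the hyperplane `H = {a·x + C = 0}` through `P = p/q`: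
any `x ∈ Δ_c(P)` satisfies `dist(x, H) ≤ d·c/(q·ξ)`. -/
theorem stmt_15 (d : ℕ) (hd : 1 ≤ d) (r : Fin d → ℝ) (hr : ∀ i, 0 ≤ r i)
    (hsum : ∑ i, r i = 1)
    (a : Fin d → ℤ) (ha : a ≠ 0)
    (ξ : ℕ) (hξub : ∀ i, (a i).natAbs ≤ ξ) (hξmem : ∃ i, (a i).natAbs = ξ)
    (C : ℝ) (H : Set (EuclideanSpace ℝ (Fin d)))
    (hH : H = {y : EuclideanSpace ℝ (Fin d) | (∑ i, (a i : ℝ) * y i) + C = 0})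
    (p : Fin d → ℤ) (q : ℕ) (hq : 0 < q)
    (hP : (∑ i, (a i : ℝ) * (p i / q)) + C = 0)
    (c t : ℝ) (hc : 0 < c) (ht : 0 < t) (htq : t ≤ q)
    (hat : ∀ i, |(a i : ℝ)| ≤ t ^ (r i))
    (x : EuclideanSpace ℝ (Fin d))
    (hx : ∀ i, |x i - p i / q| < c / (q : ℝ) ^ (1 + r i)) :
    Metric.infDist x H ≤ d * c / ((q : ℝ) * ξ) := by
  have hq0 : (0:ℝ) < q := by exact_mod_cast hq
  set S : ℝ := (∑ i, (a i : ℝ) * x i) + C with hS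
  set N : ℝ := ∑ i, ((a i : ℝ))^2 with hN
  have hξpos : 0 < ξ := by
    rcases Nat.eq_zero_or_pos ξ with h | h
    · exfalso; apply ha; funext j
      exact Int.natAbs_eq_zero.mp (Nat.le_zero.mp (h ▸ hξub j))
    · exact h
  have hξR : (0:ℝ) < ξ := by exact_mod_cast hξpos
  have hξN : (ξ:ℝ)^2 ≤ N := by
    obtain ⟨i, hi⟩ := hξmem
    have heq : ((a i : ℝ))^2 = (ξ:ℝ)^2 := by
      rw [← hi]
      rw [← sq_abs ((a i : ℝ))]
      congr 1
      rw [Nat.cast_natAbs]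
      push_cast
      rfl
    calc (ξ:ℝ)^2 = ((a i : ℝ))^2 := heq.symm
      _ ≤ N := Finset.single_le_sum (fun j _ => sq_nonneg ((a j : ℝ))) (Finset.mem_univ i)
  have hNpos : 0 < N := lt_of_lt_of_le (by positivity) hξN
  have hξsqrt : (ξ:ℝ) ≤ Real.sqrt N := by
    rw [show (ξ:ℝ) = Real.sqrt ((ξ:ℝ)^2) by rw [Real.sqrt_sq hξR.le]]
    exact Real.sqrt_le_sqrt hξN
  -- the foot point
  set y : EuclideanSpace ℝ (Fin d) := WithLp.toLp 2 (fun i => x i - S / N * a i) with hy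
  have hyH : y ∈ H := by
    rw [hH]
    show (∑ i, (a i : ℝ) * y i) + C = 0
    have : (∑ i, (a i : ℝ) * y i) = (∑ i, (a i : ℝ) * x i) - S / N * N := by
      rw [Finset.mul_sum]
      rw [← Finset.sum_sub_distrib]
      congr 1; funext i
      show (a i : ℝ) * (x i - S / N * a i) = (a i : ℝ) * x i - S / N * (a i : ℝ)^2
      ring
    rw [this, div_mul_cancel₀ _ hNpos.ne']
    rw [hS]; ring
  have hdist : dist x y = |S| / Real.sqrt N := by
    rw [EuclideanSpace.dist_eq]
    have : ∑ i, (dist (x i) (y i))^2 = S^2 / N := by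
      have : ∀ i, (dist (x i) (y i))^2 = (S/N)^2 * (a i:ℝ)^2 := by
        intro i
        rw [Real.dist_eq]
        show |x i - (x i - S / N * a i)|^2 = (S/N)^2 * (a i:ℝ)^2
        rw [show x i - (x i - S / N * a i) = S/N * a i by ring]
        rw [sq_abs, mul_pow]
      rw [Finset.sum_congr rfl (fun i _ => this i), ← Finset.mul_sum, ← hN]
      field_simp
    rw [this, Real.sqrt_div (sq_nonneg S), Real.sqrt_sq_eq_abs]
  have hSbound : |S| ≤ d * c / q := by
    have hC : C = -∑ i, (a i:ℝ) * (p i / q) := by linarith [hP]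
    have hSeq : S = ∑ i, (a i:ℝ) * (x i - p i / q) := by
      rw [hS, hC, ← sub_eq_add_neg, ← Finset.sum_sub_distrib]
      congr 1; funext i; ring
    calc |S| ≤ ∑ i, |(a i:ℝ) * (x i - p i/q)| := by
          rw [hSeq]; exact Finset.abs_sum_le_sum_abs _ _
      _ ≤ ∑ _i : Fin d, c / q := by
          apply Finset.sum_le_sum
          intro i _
          rw [abs_mul]
          have h1 : |(a i:ℝ)| ≤ (q:ℝ)^(r i) :=
            (hat i).trans (Real.rpow_le_rpow ht.le htq (hr i))
          have h2 : |x i - p i / q| ≤ c / (q:ℝ)^(1 + r i) := (hx i).le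
          have hqr : (0:ℝ) < (q:ℝ)^(r i) := Real.rpow_pos_of_pos hq0 _
          have hrw : (q:ℝ)^(1+r i) = q * (q:ℝ)^(r i) := by
            rw [Real.rpow_add hq0, Real.rpow_one]
          calc |(a i:ℝ)| * |x i - p i/q|
              ≤ (q:ℝ)^(r i) * (c / ((q:ℝ)^(1+r i))) :=
                mul_le_mul h1 h2 (abs_nonneg _) hqr.le
            _ = c / q := by rw [hrw]; field_simp
      _ = d * c / q := by
          rw [Finset.sum_const, Finset.card_univ, Fintype.card_fin, nsmul_eq_mul]
          ring
  calc Metric.infDist x H ≤ dist x y := Metric.infDist_le_dist_of_mem hyH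
    _ = |S| / Real.sqrt N := hdist
    _ ≤ (d * c / q) / ξ := by
        apply div_le_div₀ (by positivity) hSbound hξR hξsqrt
    _ = d * c / ((q:ℝ) * ξ) := by rw [div_div]
end

section
/- Let (l_1, …, l_d) be linearly independent linear forms on ℝ^d, let L ⊂ ℝ^d be a lattice, and let A_1, …, A_d > 0 satisfy A_1⋯A_d ≥ covol(L)·|det(l_1,…,l_d)|. Then there exists x ∈ L \ {0} with |l_1(x)| ≤ A_1 and |l_i(x)| < A_i for 2 ≤ i ≤ d. -/
open MeasureTheory Module Set Bornology
open scoped ENNReal NNReal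

set_option maxHeartbeats 1000000 in
/-- Minkowski's linear forms theorem (Schmidt's version): given linearly independent linear
forms `l₁,…,l_d` on `ℝ^d`, a lattice `L`, and positive bounds with
`A₁⋯A_d ≥ covol(L)·|det(l₁,…,l_d)|`, there is a nonzero `x ∈ L` with `|l₁(x)| ≤ A₁`
and `|l_i(x)| < A_i` for `i ≠ 1`. -/
theorem stmt_18 (d : ℕ) (hd : 1 ≤ d)
    (l : Fin d → ((Fin d → ℝ) →ₗ[ℝ] ℝ)) (hl : LinearIndependent ℝ l)
    (L : Submodule ℤ (Fin d → ℝ)) [DiscreteTopology L] [IsZLattice ℝ L]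
    (A : Fin d → ℝ) (hA : ∀ i, 0 < A i)
    (hAL : ZLattice.covolume L * |LinearMap.det (LinearMap.pi l)| ≤ ∏ i, A i) :
    ∃ x ∈ L, x ≠ 0 ∧ |l ⟨0, hd⟩ x| ≤ A ⟨0, hd⟩ ∧
      ∀ i : Fin d, i ≠ ⟨0, hd⟩ → |l i x| < A i := by
  classical
  set i0 : Fin d := ⟨0, hd⟩ with hi0
  set T : (Fin d → ℝ) →ₗ[ℝ] (Fin d → ℝ) := LinearMap.pi l with hT
  have hdet : LinearMap.det T ≠ 0 := by
    intro h
    obtain ⟨x, hxker, hx0⟩ :=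
      (Submodule.ne_bot_iff _).mp (LinearMap.bot_lt_ker_of_det_eq_zero h).ne'
    have hx : ∀ i, l i x = 0 := fun i => congrFun (LinearMap.mem_ker.mp hxker) i
    have hspan : Submodule.span ℝ (Set.range l) = ⊤ := by
      haveI : Nonempty (Fin d) := ⟨i0⟩
      refine hl.span_eq_top_of_card_eq_finrank ?_
      simp [Subspace.dual_finrank_eq, Module.finrank_fin_fun]
    apply hx0
    rw [← Module.forall_dual_apply_eq_zero_iff ℝ x]
    intro φ
    have hφ : φ ∈ Submodule.span ℝ (Set.range l) := hspan ▸ Submodule.mem_top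
    refine Submodule.span_induction ?_ ?_ ?_ ?_ hφ
    · rintro _ ⟨i, rfl⟩; exact hx i
    · rfl
    · intro f g _ _ hf hg; simp [hf, hg]
    · intro c f _ hf; simp [hf]
  have hdetpos : 0 < |LinearMap.det T| := abs_pos.mpr hdet
  -- fundamental domain
  set b := Module.Free.chooseBasis ℤ L with hb
  have fund := ZLattice.isAddFundamentalDomain b (volume : Measure (Fin d → ℝ))
  set F := ZSpan.fundamentalDomain (b.ofZLatticeBasis ℝ) with hF
  have hFne : volume F ≠ ⊤ :=
    ((ZSpan.fundamentalDomain_isBounded _).measure_lt_top).ne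
  have hFvol : volume F = ENNReal.ofReal (ZLattice.covolume L) := by
    rw [ZLattice.covolume_eq_measure_fundamentalDomain L volume fund, measureReal_def, ENNReal.ofReal_toReal hFne]
  -- boxes
  set box : ℝ → Set (Fin d → ℝ) := fun ε =>
    univ.pi fun i => if i = i0 then Icc (-(A i0 + ε)) (A i0 + ε) else Ioo (-(A i)) (A i) with hbox
  set P : ℝ := ∏ i ∈ Finset.univ.erase i0, A i with hP
  have hPpos : 0 < P := Finset.prod_pos fun i _ => hA i
  have hAeq : ∏ i, A i = A i0 * P := (Finset.mul_prod_erase Finset.univ A (Finset.mem_univ i0)).symm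
  have hboxvol : ∀ ε : ℝ, 0 < ε →
      volume (box ε) = ENNReal.ofReal (2 ^ d * ((A i0 + ε) * P)) := by
    intro ε hε
    rw [hbox, volume_pi_pi]
    have : ∀ i : Fin d, volume (if i = i0 then Icc (-(A i0 + ε)) (A i0 + ε)
        else Ioo (-(A i)) (A i)) = ENNReal.ofReal (2 * (if i = i0 then A i0 + ε else A i)) := by
      intro i
      by_cases h : i = i0 <;> simp [h, Real.volume_Icc, Real.volume_Ioo] <;> ring_nf <;>
          rw [← ENNReal.ofReal_ofNat 2, ← ENNReal.ofReal_mul' zero_le_two] <;> ring_nf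
    simp_rw [this]
    rw [← ENNReal.ofReal_prod_of_nonneg]
    · congr 1
      rw [Finset.prod_mul_distrib, Finset.prod_const, Finset.card_univ, Fintype.card_fin,
        ← Finset.mul_prod_erase Finset.univ _ (Finset.mem_univ i0), if_pos rfl]
      have : ∏ i ∈ Finset.univ.erase i0, (if i = i0 then A i0 + ε else A i) = P := by
        refine Finset.prod_congr rfl fun i hi => ?_
        rw [if_neg (Finset.mem_erase.mp hi).1]
      rw [this]
    · intro i _
      by_cases h : i = i0 <;> simp [h] <;> nlinarith [hA i0, hA i]
  -- key application of Minkowski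
  have key : ∀ ε : ℝ, 0 < ε → ∃ x : L, x ≠ 0 ∧ (x : Fin d → ℝ) ∈ T ⁻¹' (box ε) := by
    intro ε hε
    have hconv : Convex ℝ (T ⁻¹' (box ε)) := by
      refine Convex.linear_preimage ?_ T
      refine convex_pi fun i _ => ?_
      by_cases h : i = i0 <;> simp [h, convex_Icc, convex_Ioo]
    have hsymm : ∀ x ∈ T ⁻¹' (box ε), -x ∈ T ⁻¹' (box ε) := by
      intro x hx
      simp only [Set.mem_preimage, map_neg, hbox, Set.mem_pi, Set.mem_univ, forall_true_left] at hx ⊢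
      intro i
      have := hx i
      by_cases h : i = i0 <;> simp only [h, if_pos, if_neg, if_true] at this ⊢ <;>
        · simp only [Pi.neg_apply] at *
          constructor <;> [linarith [this.1, this.2]; linarith [this.1, this.2]]
    have hlt : volume F * 2 ^ finrank ℝ (Fin d → ℝ) < volume (T ⁻¹' (box ε)) := by
      have h2 : ((2:ℝ≥0∞))^d = ENNReal.ofReal ((2:ℝ)^d) := by
        rw [ENNReal.ofReal_pow (by norm_num : (0:ℝ) ≤ 2)]
        norm_num
      rw [Measure.addHaar_preimage_linearMap volume hdet, hboxvol ε hε, hFvol,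
        Module.finrank_fin_fun, h2,
        ← ENNReal.ofReal_mul (ZLattice.covolume_pos L volume).le,
        ← ENNReal.ofReal_mul (abs_nonneg _)]
      have hrpos : (0:ℝ) < |(LinearMap.det T)⁻¹| * (2 ^ d * ((A i0 + ε) * P)) := by
        apply mul_pos
        · rw [abs_inv]; exact inv_pos.mpr hdetpos
        · exact mul_pos (by positivity) (mul_pos (by linarith [hA i0]) hPpos)
      rw [ENNReal.ofReal_lt_ofReal_iff hrpos]
      have hstep : ZLattice.covolume L volume * |LinearMap.det T| < (A i0 + ε) * P := by
        nlinarith [hAL, hAeq, hPpos]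
      have hinv : |(LinearMap.det T)⁻¹| = |LinearMap.det T|⁻¹ := abs_inv _
      rw [hinv]
      rw [← lt_div_iff₀ hdetpos] at hstep
      have h2d : (0:ℝ) < 2 ^ d := by positivity
      calc ZLattice.covolume L volume * 2 ^ d
          < ((A i0 + ε) * P / |LinearMap.det T|) * 2 ^ d :=
            mul_lt_mul_of_pos_right hstep h2d
        _ = |LinearMap.det T|⁻¹ * (2 ^ d * ((A i0 + ε) * P)) := by
            field_simp
    haveI : Countable ↥L.toAddSubgroup := inferInstanceAs (Countable L)
    obtain ⟨x, hx0, hx⟩ := exists_ne_zero_mem_lattice_of_measure_mul_two_pow_lt_measure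
      (L := L.toAddSubgroup) fund hsymm hconv hlt
    exact ⟨x, hx0, hx⟩
  -- choose lattice points for ε = 1/(n+1)
  choose xs hxs0 hxs using fun n : ℕ => key (1/(n+1)) (by positivity)
  -- all these points lie in a fixed compact set
  set Kbox : Set (Fin d → ℝ) := univ.pi fun i => Icc (-(A i + 1)) (A i + 1) with hKbox
  have hsub : ∀ n : ℕ, box (1/(n+1)) ⊆ Kbox := by
    intro n y hy
    have hn1 : (0:ℝ) < (n:ℝ) + 1 := by positivity
    have hle : 1/((n:ℝ)+1) ≤ 1 := by
      rw [div_le_one hn1]; linarith [Nat.cast_nonneg (α := ℝ) n]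
    intro i _
    have := hy i (Set.mem_univ i)
    by_cases h : i = i0
    · subst h
      have h' : -(A i0 + 1/((n:ℝ)+1)) ≤ y i0 ∧ y i0 ≤ A i0 + 1/((n:ℝ)+1) := by
        simpa using this
      exact ⟨by linarith [h'.1], by linarith [h'.2]⟩
    · have h' : -(A i) < y i ∧ y i < A i := by
        simpa [h] using this
      exact ⟨by linarith [h'.1], by linarith [h'.2]⟩
  set e : (Fin d → ℝ) ≃ₗ[ℝ] (Fin d → ℝ) := T.equivOfDetNeZero hdet with he
  have hTe : ∀ z, T z = e z := fun z => rfl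
  have hKcpt : IsCompact (T ⁻¹' Kbox) := by
    have h1 : IsCompact Kbox := isCompact_univ_pi fun i => isCompact_Icc
    have h2 : T ⁻¹' Kbox = ⇑e.symm '' Kbox := by
      ext z
      constructor
      · intro hz
        exact ⟨T z, hz, by rw [hTe]; exact e.symm_apply_apply z⟩
      · rintro ⟨y, hy, rfl⟩
        show T (e.symm y) ∈ Kbox
        rw [hTe, e.apply_symm_apply]
        exact hy
    rw [h2]
    exact h1.image e.symm.toLinearMap.continuous_of_finiteDimensional
  have hLclosed : IsClosed ((L : Set (Fin d → ℝ))) := by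
    haveI : DiscreteTopology ↥L.toAddSubgroup := inferInstanceAs (DiscreteTopology L)
    exact AddSubgroup.isClosed_of_discrete (H := L.toAddSubgroup)
  haveI : DiscreteTopology ↥(L : Set (Fin d → ℝ)) := inferInstanceAs (DiscreteTopology L)
  have hfin : ((T ⁻¹' Kbox) ∩ (L : Set (Fin d → ℝ))).Finite :=
    Metric.finite_isBounded_inter_isClosed DiscreteTopology.isDiscrete hKcpt.isBounded hLclosed
  have hxsK : ∀ n : ℕ, ((xs n : Fin d → ℝ)) ∈ (T ⁻¹' Kbox) ∩ (L : Set (Fin d → ℝ)) := by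
    intro n
    exact ⟨Set.preimage_mono (hsub n) (hxs n), (xs n).2⟩
  haveI : Finite ↥((T ⁻¹' Kbox) ∩ (L : Set (Fin d → ℝ))) := hfin.to_subtype
  obtain ⟨y, hy⟩ := Finite.exists_infinite_fiber
    (fun n : ℕ => (⟨xs n, hxsK n⟩ : ↥((T ⁻¹' Kbox) ∩ (L : Set (Fin d → ℝ)))))
  have hs : {n : ℕ | (xs n : Fin d → ℝ) = (y : Fin d → ℝ)}.Infinite := by
    refine Set.Infinite.mono ?_ (Set.infinite_coe_iff.mp hy)
    intro n hn
    simp only [Set.mem_preimage, Set.mem_singleton_iff, Subtype.ext_iff] at hn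
    exact hn
  obtain ⟨n0, hn0⟩ := hs.nonempty
  set x : Fin d → ℝ := (y : Fin d → ℝ) with hx
  have hxL : x ∈ L := y.2.2
  have hxne : x ≠ 0 := by
    intro h
    exact hxs0 n0 (ZeroMemClass.coe_eq_zero.mp
      ((show ((xs n0 : Fin d → ℝ)) = x from hn0).trans h))
  have hmem : ∀ n ∈ {n : ℕ | (xs n : Fin d → ℝ) = (y : Fin d → ℝ)},
      (|l i0 x| ≤ A i0 + 1/((n:ℝ)+1)) ∧ ∀ i, i ≠ i0 → |l i x| < A i := by
    intro n hn
    have hb := hxs n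
    rw [Set.mem_preimage] at hb
    have hbx : ∀ i, T (xs n : Fin d → ℝ) i ∈
        (if i = i0 then Icc (-(A i0 + 1/((n:ℝ)+1))) (A i0 + 1/((n:ℝ)+1)) else Ioo (-(A i)) (A i)) :=
      fun i => hb i (Set.mem_univ i)
    constructor
    · have h1 := hbx i0
      rw [if_pos rfl] at h1
      have hTi : T (xs n : Fin d → ℝ) i0 = l i0 x := by
        rw [hn]; rfl
      rw [hTi] at h1
      exact abs_le.mpr h1
    · intro i hi
      have h1 := hbx i
      rw [if_neg hi] at h1
      have hTi : T (xs n : Fin d → ℝ) i = l i x := by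
        rw [hn]; rfl
      rw [hTi] at h1
      exact abs_lt.mpr h1
  refine ⟨x, hxL, hxne, ?_, (hmem n0 hn0).2⟩
  by_contra hcon
  push_neg at hcon
  obtain ⟨N, hN⟩ := exists_nat_one_div_lt (show (0:ℝ) < |l i0 x| - A i0 by linarith)
  obtain ⟨n, hn, hNn⟩ := hs.exists_gt N
  have h1 := (hmem n hn).1
  have h2 : 1/((n:ℝ)+1) ≤ 1/((N:ℝ)+1) := by
    apply one_div_le_one_div_of_le (by positivity)
    have : (N:ℝ) ≤ n := by exact_mod_cast hNn.le
    linarith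
  linarith
end
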